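/- arXiv:1103.0337 — 6 statements merged into one kernel-verified Lean document; each statement's English description precedes it below -/
import Mathlib

section
/- Let E : y² = x³ + A·x + B be an elliptic curve over a field K. Let R = (a, b) and S = (c, d) be affine points on E with a ≠ c, let k = (d − b)/(c − a) be the chord slope, and set α = k² − a − c (the x-coordinate of R + S). Define the line function through R and S by L_{R,S}(x, y) = y − b − k·(x − a), the line function through −R = (a, −b) and −S = (c, −d) by L_{−R,−S}(x, y) = y + b + k·(x − a), and vertical line functions V_R(x, y) = x − a, V_S(x, y) = x − c, V_{R+S}(x, y) = x − α. Then for every point Q = (x, y) ∈ K² satisfying y² = x³ + A·x + B, one has L_{R,S}(Q)·L_{−R,−S}(Q) = V_R(Q)·V_S(Q)·V_{R+S}(Q). -/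
/-- **Lemma 2 of the paper (chord case).**
Let `R = (a, b)` and `S = (c, d)` be affine points on `E : y² = x³ + A·x + B` with
`a ≠ c`, let `k = (d − b)/(c − a)` and `α = k² − a − c`.  With the line functions
`L_{R,S}(x, y) = y − b − k·(x − a)`, `L_{−R,−S}(x, y) = y + b + k·(x − a)` and the
vertical line functions `V_R(x, y) = x − a`, `V_S(x, y) = x − c`,
`V_{R+S}(x, y) = x − α`, every point `Q = (x, y)` on `E` satisfies
`L_{R,S}(Q)·L_{−R,−S}(Q) = V_R(Q)·V_S(Q)·V_{R+S}(Q)`. -/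
theorem line_times_oppositeLine_eq_verticals_chord {K : Type*} [Field K]
    (A B a b c d k α : K)
    (hR : b ^ 2 = a ^ 3 + A * a + B) (hS : d ^ 2 = c ^ 3 + A * c + B)
    (hac : a ≠ c) (hk : k = (d - b) / (c - a)) (hα : α = k ^ 2 - a - c) :
    ∀ x y : K, y ^ 2 = x ^ 3 + A * x + B →
      (y - b - k * (x - a)) * (y + b + k * (x - a)) =
        (x - a) * (x - c) * (x - α) := by
  intro x y hQ
  have hca : c - a ≠ 0 := sub_ne_zero.mpr (Ne.symm hac)
  have hk' : k * (c - a) = d - b := by rw [hk]; exact div_mul_cancel₀ _ hca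
  subst hα
  linear_combination (norm := (field_simp; ring)) hQ - hR + (x - a) * (-k) * hk' +
    (x - a) / (c - a) * (hR - hS - (b + d) * hk')
end

section
/- Let E : y² = x³ + A·x + B be an elliptic curve over a field K with char K ≠ 2. Let T = (a, b) be an affine point on E with b ≠ 0, let k = (3a² + A)/(2b) be the tangent slope at T, and set α = k² − 2a (the x-coordinate of 2T). Define L_{T,T}(x, y) = y − b − k·(x − a) (the tangent line at T), L_{−T,−T}(x, y) = y + b + k·(x − a) (the tangent line at −T), V_T(x, y) = x − a, and V_{2T}(x, y) = x − α. Then for every point Q = (x, y) ∈ K² satisfying y² = x³ + A·x + B, one has L_{T,T}(Q)·L_{−T,−T}(Q) = V_T(Q)²·V_{2T}(Q). -/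
/-- **Lemma 2 of the paper (doubling case).**
Let `T = (a, b)` be an affine point on `E : y² = x³ + A·x + B` over a field of
characteristic `≠ 2`, with `b ≠ 0`, tangent slope `k = (3a² + A)/(2b)` and
`α = k² − 2a`.  With `L_{T,T}(x, y) = y − b − k·(x − a)`,
`L_{−T,−T}(x, y) = y + b + k·(x − a)`, `V_T(x, y) = x − a` and
`V_{2T}(x, y) = x − α`, every point `Q = (x, y)` on `E` satisfies
`L_{T,T}(Q)·L_{−T,−T}(Q) = V_T(Q)²·V_{2T}(Q)`. -/
theorem tangent_times_oppositeTangent_eq_verticals {K : Type*} [Field K]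
    (hchar : ringChar K ≠ 2) (A B a b k α : K)
    (hT : b ^ 2 = a ^ 3 + A * a + B) (hb : b ≠ 0)
    (hk : k = (3 * a ^ 2 + A) / (2 * b)) (hα : α = k ^ 2 - 2 * a) :
    ∀ x y : K, y ^ 2 = x ^ 3 + A * x + B →
      (y - b - k * (x - a)) * (y + b + k * (x - a)) =
        (x - a) ^ 2 * (x - α) := by
  intro x y hQ
  have h2 : (2 : K) ≠ 0 := Ring.two_ne_zero hchar
  have hk2 : 2 * b * k = 3 * a ^ 2 + A := by
    rw [hk]; field_simp
  subst hα
  linear_combination hQ - hT - (x - a) * hk2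
end

section
/- Let E : y² = x³ + A·x + B be an elliptic curve over a field K with char K ≠ 2. Let T = (a, b) be an affine point on E with b ≠ 0, let k = (3a² + A)/(2b), and set α = k² − 2a. Let Q = (x, y) be a point of E with x ≠ a, x ≠ α, and y + b + k·(x − a) ≠ 0. Then L_{T,T}(Q)/(V_T(Q)²·V_{2T}(Q)) = 1/L_{−T,−T}(Q), where L_{T,T}(Q) = y − b − k·(x − a), L_{−T,−T}(Q) = y + b + k·(x − a), V_T(Q) = x − a, and V_{2T}(Q) = x − α. -/
/-- **Lemma 3 (Equation (3)) of the paper.**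
Let `T = (a, b)` be an affine point on `E : y² = x³ + A·x + B` over a field of
characteristic `≠ 2`, with `b ≠ 0`, tangent slope `k = (3a² + A)/(2b)` and
`α = k² − 2a`.  If `Q = (x, y)` is a point of `E` with `x ≠ a`, `x ≠ α` and
`y + b + k·(x − a) ≠ 0`, then
`L_{T,T}(Q)/(V_T(Q)²·V_{2T}(Q)) = 1/L_{−T,−T}(Q)`. -/
theorem tangent_over_verticals_eq_inv_oppositeTangent {K : Type*} [Field K]
    (hchar : ringChar K ≠ 2) (A B a b k α x y : K)
    (hT : b ^ 2 = a ^ 3 + A * a + B) (hb : b ≠ 0)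
    (hk : k = (3 * a ^ 2 + A) / (2 * b)) (hα : α = k ^ 2 - 2 * a)
    (hQ : y ^ 2 = x ^ 3 + A * x + B)
    (hxa : x ≠ a) (hxα : x ≠ α) (hL : y + b + k * (x - a) ≠ 0) :
    (y - b - k * (x - a)) / ((x - a) ^ 2 * (x - α)) =
      1 / (y + b + k * (x - a)) := by
  have h2 : (2 : K) ≠ 0 := Ring.two_ne_zero hchar
  have hk' : k * (2 * b) = 3 * a ^ 2 + A := by
    rw [hk, div_mul_cancel₀ _ (mul_ne_zero h2 hb)]
  have hxa' : x - a ≠ 0 := sub_ne_zero.mpr hxa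
  have hxα' : x - α ≠ 0 := sub_ne_zero.mpr hxα
  rw [div_eq_div_iff (mul_ne_zero (pow_ne_zero 2 hxa') hxα') hL]
  · linear_combination hQ - hT - (x - a) * hk' + (x - a) ^ 2 * hα
end

section
/- Let E : y² = x³ + A·x + B be an elliptic curve over a field K with char K ≠ 2. Let T = (a, b) be an affine point on E with b ≠ 0, let k = (3a² + A)/(2b), and set α = k² − 2a. Define L_{T,T}(x, y) = y − b − k·(x − a), V_T(x, y) = x − a, and V_{2T}(x, y) = x − α. Then for every point Q = (x, y) ∈ K² satisfying y² = x³ + A·x + B, denoting −Q = (x, −y), one has L_{T,T}(Q)·L_{T,T}(−Q) = −V_T(Q)²·V_{2T}(Q); consequently, if all the factors are nonzero, L_{T,T}(Q)/(V_T(Q)²·V_{2T}(Q)) = −1/L_{T,T}(−Q). -/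
/-- **Equation (1) of the paper (Blake–Murty–Xu's identity).**
Let `T = (a, b)` be an affine point on `E : y² = x³ + A·x + B` over a field of
characteristic `≠ 2`, with `b ≠ 0`, tangent slope `k = (3a² + A)/(2b)` and
`α = k² − 2a`.  With `L_{T,T}(x, y) = y − b − k·(x − a)`, `V_T(x, y) = x − a`,
`V_{2T}(x, y) = x − α`, every point `Q = (x, y)` on `E`, whose negative is
`−Q = (x, −y)`, satisfies `L_{T,T}(Q)·L_{T,T}(−Q) = −V_T(Q)²·V_{2T}(Q)`;
consequently, if all the factors are nonzero,
`L_{T,T}(Q)/(V_T(Q)²·V_{2T}(Q)) = −1/L_{T,T}(−Q)`. -/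
theorem BMX_tangent_identity {K : Type*} [Field K]
    (hchar : ringChar K ≠ 2) (A B a b k α : K)
    (hT : b ^ 2 = a ^ 3 + A * a + B) (hb : b ≠ 0)
    (hk : k = (3 * a ^ 2 + A) / (2 * b)) (hα : α = k ^ 2 - 2 * a) :
    ∀ x y : K, y ^ 2 = x ^ 3 + A * x + B →
      (y - b - k * (x - a)) * (-y - b - k * (x - a)) =
        -((x - a) ^ 2 * (x - α)) ∧
      ((y - b - k * (x - a)) ≠ 0 → (-y - b - k * (x - a)) ≠ 0 →
        (x - a) ≠ 0 → (x - α) ≠ 0 →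
        (y - b - k * (x - a)) / ((x - a) ^ 2 * (x - α)) =
          -(1 / (-y - b - k * (x - a)))) := by
  intro x y hQ
  have h2 : (2:K) ≠ 0 := Ring.two_ne_zero hchar
  have hkb : k * (2 * b) = 3 * a ^ 2 + A := by
    rw [hk]; field_simp
  have hmain : (y - b - k * (x - a)) * (-y - b - k * (x - a)) =
      -((x - a) ^ 2 * (x - α)) := by
    have : (y - b - k * (x - a)) * (-y - b - k * (x - a)) =
        k^2 * (x-a)^2 + (k * (2*b)) * (x-a) + (b^2 - y^2) := by ring
    rw [this, hkb, hT, hQ, hα]; ring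
  refine ⟨hmain, fun h1 h2' h3 h4 => ?_⟩
  have hne : (x - a) ^ 2 * (x - α) ≠ 0 := by
    exact mul_ne_zero (pow_ne_zero _ h3) h4
  rw [show (x - a) ^ 2 * (x - α) =
      -((y - b - k * (x - a)) * (-y - b - k * (x - a))) from by
    rw [hmain, neg_neg]]
  rw [div_neg, neg_eq_iff_eq_neg, neg_neg, div_mul_cancel_left₀ h1, one_div]
end

section
/- Let E : y² = x³ + A·x + B be an elliptic curve over a field K with char K ≠ 2. Let T = (x₁, y₁) be an affine point on E with y₁ ≠ 0, let λ₁ = (3x₁² + A)/(2y₁), x₃ = λ₁² − 2x₁, y₃ = λ₁·(x₁ − x₃) − y₁ (so 2T = (x₃, y₃)). Let P = (x₂, y₂) be an affine point on E with x₂ ≠ x₃, and let λ₂ = (y₂ − y₃)/(x₂ − x₃). Then for every point (x, y) ∈ K² satisfying y² = x³ + A·x + B, one has (y + y₃ − λ₁·(x − x₃))·(y − y₃ − λ₂·(x − x₃)) = (x − x₃)·[(x − x₁)·(x + x₁ + x₃ + λ₁·λ₂) − (λ₁ + λ₂)·(y − y₁)]. -/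
/-- **Equation (5) of the paper: the Eisenträger–Lauter–Montgomery parabola
for the combined doubling-and-addition step `2T + P`.**
Let `T = (x₁, y₁)` be an affine point on `E : y² = x³ + A·x + B` (over a field of
characteristic `≠ 2`) with `y₁ ≠ 0`, tangent slope `λ₁ = (3x₁² + A)/(2y₁)`,
`x₃ = λ₁² − 2x₁`, `y₃ = λ₁·(x₁ − x₃) − y₁` (so `2T = (x₃, y₃)`).  Let
`P = (x₂, y₂)` be an affine point on `E` with `x₂ ≠ x₃` and let
`λ₂ = (y₂ − y₃)/(x₂ − x₃)`.  Then for every point `(x, y)` on `E`,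
`(y + y₃ - λ₁·(x − x₃))·(y − y₃ − λ₂·(x − x₃))
  = (x − x₃)·[(x − x₁)·(x + x₁ + x₃ + λ₁·λ₂) − (λ₁ + λ₂)·(y − y₁)]`. -/
theorem ELM_parabola_doubling_addition {K : Type*} [Field K]
    (hchar : ringChar K ≠ 2) (A B x₁ y₁ x₂ y₂ x₃ y₃ l₁ l₂ : K)
    (hT : y₁ ^ 2 = x₁ ^ 3 + A * x₁ + B) (hy₁ : y₁ ≠ 0)
    (hl₁ : l₁ = (3 * x₁ ^ 2 + A) / (2 * y₁))
    (hx₃ : x₃ = l₁ ^ 2 - 2 * x₁) (hy₃ : y₃ = l₁ * (x₁ - x₃) - y₁)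
    (hP : y₂ ^ 2 = x₂ ^ 3 + A * x₂ + B) (hx₂₃ : x₂ ≠ x₃)
    (hl₂ : l₂ = (y₂ - y₃) / (x₂ - x₃)) :
    ∀ x y : K, y ^ 2 = x ^ 3 + A * x + B →
      (y + y₃ - l₁ * (x - x₃)) * (y - y₃ - l₂ * (x - x₃)) =
        (x - x₃) * ((x - x₁) * (x + x₁ + x₃ + l₁ * l₂) - (l₁ + l₂) * (y - y₁)) := by
  have h2 : (2 : K) ≠ 0 := Ring.two_ne_zero hchar
  have h2y : (2 : K) * y₁ ≠ 0 := mul_ne_zero h2 hy₁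
  have e1 : l₁ * (2 * y₁) = 3 * x₁ ^ 2 + A := by
    rw [hl₁]; field_simp
  subst hx₃ hy₃
  intro x y h
  linear_combination h - hT - (x - x₁) * e1
end

section
/- Let E : y² = x³ + A·x + B be an elliptic curve over a field K. Let R = (x₁, y₁) and S = (x₂, y₂) be affine points on E with x₁ ≠ x₂, let λ₁ = (y₂ − y₁)/(x₂ − x₁), x₃ = λ₁² − x₁ − x₂, y₃ = λ₁·(x₁ − x₃) − y₁ (so R + S = (x₃, y₃)). Suppose x₁ ≠ x₃ and let λ₂ = (y₁ − y₃)/(x₁ − x₃). Then for every point (x, y) ∈ K² satisfying y² = x³ + A·x + B, one has (y + y₃ − λ₁·(x − x₃))·(y − y₃ − λ₂·(x − x₃)) = (x − x₃)·[(x − x₁)·(x + x₁ + x₃ + λ₁·λ₂) − (λ₁ + λ₂)·(y − y₁)]. -/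
/-- **Equation (4) of the paper: the Eisenträger–Lauter–Montgomery parabola
substitution for computing `2R + S` directly.**
Let `R = (x₁, y₁)` and `S = (x₂, y₂)` be affine points on `E : y² = x³ + A·x + B`
with `x₁ ≠ x₂`, chord slope `λ₁ = (y₂ − y₁)/(x₂ − x₁)`, `x₃ = λ₁² − x₁ − x₂`,
`y₃ = λ₁·(x₁ − x₃) − y₁` (so `R + S = (x₃, y₃)`).  Suppose `x₁ ≠ x₃` and let
`λ₂ = (y₁ − y₃)/(x₁ − x₃)`.  Then for every point `(x, y)` on `E`,
`(y + y₃ − λ₁·(x − x₃))·(y − y₃ − λ₂·(x − x₃))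
  = (x − x₃)·[(x − x₁)·(x + x₁ + x₃ + λ₁·λ₂) − (λ₁ + λ₂)·(y − y₁)]`. -/
theorem ELM_parabola_double_add {K : Type*} [Field K]
    (A B x₁ y₁ x₂ y₂ x₃ y₃ l₁ l₂ : K)
    (hR : y₁ ^ 2 = x₁ ^ 3 + A * x₁ + B) (hS : y₂ ^ 2 = x₂ ^ 3 + A * x₂ + B)
    (hx₁₂ : x₁ ≠ x₂) (hl₁ : l₁ = (y₂ - y₁) / (x₂ - x₁))
    (hx₃ : x₃ = l₁ ^ 2 - x₁ - x₂) (hy₃ : y₃ = l₁ * (x₁ - x₃) - y₁)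
    (hx₁₃ : x₁ ≠ x₃) (hl₂ : l₂ = (y₁ - y₃) / (x₁ - x₃)) :
    ∀ x y : K, y ^ 2 = x ^ 3 + A * x + B →
      (y + y₃ - l₁ * (x - x₃)) * (y - y₃ - l₂ * (x - x₃)) =
        (x - x₃) * ((x - x₁) * (x + x₁ + x₃ + l₁ * l₂) - (l₁ + l₂) * (y - y₁)) := by
  intro x y h
  have h12 : x₂ - x₁ ≠ 0 := sub_ne_zero.mpr (Ne.symm hx₁₂)
  have h13 : x₁ - x₃ ≠ 0 := sub_ne_zero.mpr hx₁₃
  have e1 : l₁ * (x₂ - x₁) = y₂ - y₁ := by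
    rw [hl₁]; field_simp
  have e2 : l₂ * (x₁ - x₃) = y₁ - y₃ := by
    rw [hl₂]; field_simp
  have inner : l₁ ^ 2 * (x₁ - x₂) - 2 * l₁ * y₁ + x₁ ^ 2 + x₁ * x₂ + x₂ ^ 2 + A = 0 := by
    have h0 : (l₁ ^ 2 * (x₁ - x₂) - 2 * l₁ * y₁ + x₁ ^ 2 + x₁ * x₂ + x₂ ^ 2 + A) * (x₁ - x₂) = 0 := by
      linear_combination (y₁ + y₂ - l₁ * (x₁ - x₂)) * e1 + hS - hR
    rcases mul_eq_zero.mp h0 with h' | h'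
    · exact h'
    · exact absurd h' (sub_ne_zero.mpr hx₁₂)
  have key : y₃ ^ 2 = x₃ ^ 3 + A * x₃ + B := by
    rw [hy₃, hx₃]
    linear_combination hR + (x₁ - (l₁ ^ 2 - x₁ - x₂)) * inner
  have aux : x₁ ^ 2 + x₁ * x₃ + x₃ ^ 2 + A - l₂ * (y₁ + y₃) = 0 := by
    have h0 : (x₁ ^ 2 + x₁ * x₃ + x₃ ^ 2 + A - l₂ * (y₁ + y₃)) * (x₁ - x₃) = 0 := by
      linear_combination key - hR - (y₁ + y₃) * e2
    rcases mul_eq_zero.mp h0 with h' | h'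
    · exact h'
    · exact absurd h' h13
  linear_combination h - key + (x - x₃) * l₁ * e2 + (x - x₃) * aux
end
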